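/- Let α_j have property P_0(-d) (i.e., |α_j| ≤ C(j+1)^{-d-1}, |α_j - α_{j+1}| ≤ C(j+1)^{-d-2}) and β_j have property P_0(e), with |d| < 1, |e| < 1, and assume Σ|α_j| < ∞ if d = 0, Σ|β_j| < ∞ if e = 0, and Σ β_j = 0 if e < 0. Then for all j > 0, t > 0: |Σ_{k=0}^j α_{k+t} β_{j-k}| ≤ C j^e t^{-d-1} when j ≤ t, and ≤ C j^{e-1} max(j^{-d}, t^{-d}) when j > t. -/

import Mathlib

set_option maxHeartbeats 1000000

open Finset in
lemma sumA (p : ℝ) (hp1 : -1 < p) (hp0 : p < 0) (n : ℕ) :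
    ∑ m ∈ Finset.range n, ((m : ℝ) + 1) ^ p ≤ (1 + 1/(p+1)) * (n:ℝ) ^ (p+1) := by
  have hq : 0 < p + 1 := by linarith
  rcases Nat.eq_zero_or_pos n with h0 | h1
  · subst h0; simp [Real.zero_rpow (ne_of_gt hq)]
  have anti : AntitoneOn (fun x : ℝ => x ^ p) (Set.Icc 1 (1 + ((n-1 : ℕ) : ℝ))) := by
    intro x hx y hy hxy
    exact Real.rpow_le_rpow_of_nonpos (lt_of_lt_of_le one_pos hx.1) hxy hp0.le
  have key := anti.sum_le_integral
  have hint : (∫ x in (1:ℝ)..(1 + ((n-1:ℕ):ℝ)), x ^ p)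
      = ((1 + ((n-1:ℕ):ℝ)) ^ (p+1) - 1 ^ (p+1)) / (p+1) := by
    rw [integral_rpow (Or.inl hp1)]
  have hcast : (1 : ℝ) + ((n-1:ℕ):ℝ) = (n:ℝ) := by
    have : (1:ℕ) ≤ n := h1
    push_cast [Nat.cast_sub this]
    ring
  rw [hint, hcast] at key
  have hsplit : ∑ m ∈ Finset.range n, ((m : ℝ) + 1) ^ p
      = (∑ i ∈ Finset.range (n-1), ((1:ℝ) + ((i+1 : ℕ):ℝ)) ^ p) + 1 := by
    conv_lhs => rw [show n = (n-1) + 1 by omega]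
    rw [Finset.sum_range_succ']
    push_cast
    norm_num
    exact Finset.sum_congr rfl fun i _ => by ring_nf
  rw [hsplit]
  have h1n : (1:ℝ) ≤ (n:ℝ) ^ (p+1) :=
    Real.one_le_rpow (by exact_mod_cast h1) hq.le
  have h1p : (1:ℝ)^(p+1) = 1 := Real.one_rpow _
  calc (∑ i ∈ Finset.range (n-1), ((1:ℝ) + ((i+1 : ℕ):ℝ)) ^ p) + 1
      ≤ ((n:ℝ) ^ (p+1) - 1^(p+1)) / (p+1) + 1 := by linarith [key]
    _ ≤ (n:ℝ)^(p+1) / (p+1) + (n:ℝ)^(p+1) := by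
        rw [h1p]
        have : ((n:ℝ)^(p+1) - 1)/(p+1) ≤ (n:ℝ)^(p+1)/(p+1) := by
          rw [div_le_div_iff_of_pos_right hq]; linarith
        linarith
    _ = (1 + 1/(p+1)) * (n:ℝ) ^ (p+1) := by ring

open Finset in
lemma sumB (p : ℝ) (hp : p < -1) (n N : ℕ) (hn : 1 ≤ n) :
    ∑ m ∈ Finset.Ico n N, ((m : ℝ) + 1) ^ p ≤ (n:ℝ) ^ (p+1) / (-(p+1)) := by
  have hq : p + 1 < 0 := by linarith
  have hrhs : 0 ≤ (n:ℝ) ^ (p+1) / (-(p+1)) := by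
    apply div_nonneg (Real.rpow_nonneg (by positivity) _) (by linarith)
  rcases le_or_gt N n with hNn | hnN
  · rw [Finset.Ico_eq_empty (by omega)]; simpa using hrhs
  have anti : AntitoneOn (fun x : ℝ => x ^ p) (Set.Icc (n:ℝ) ((n:ℝ) + ((N-n : ℕ) : ℝ))) := by
    intro x hx y hy hxy
    have : (0:ℝ) < x := lt_of_lt_of_le (by exact_mod_cast hn) hx.1
    exact Real.rpow_le_rpow_of_nonpos this hxy (by linarith : p ≤ 0)
  have key := anti.sum_le_integral
  have hcast : (n : ℝ) + ((N-n:ℕ):ℝ) = (N:ℝ) := by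
    push_cast [Nat.cast_sub hnN.le]
    ring
  have hint : (∫ x in (n:ℝ)..((n:ℝ) + ((N-n:ℕ):ℝ)), x ^ p)
      = (((n:ℝ) + ((N-n:ℕ):ℝ)) ^ (p+1) - (n:ℝ) ^ (p+1)) / (p+1) := by
    rw [integral_rpow]
    right
    constructor
    · linarith
    · rw [hcast]
      intro h
      rw [Set.mem_uIcc] at h
      have h1 : (1:ℝ) ≤ (n:ℝ) := by exact_mod_cast hn
      have h2 : (1:ℝ) ≤ (N:ℝ) := by
        have : 1 ≤ N := by omega
        exact_mod_cast this
      rcases h with ⟨h,_⟩|⟨h,_⟩ <;> linarith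
  rw [hint, hcast] at key
  have heq : ∑ m ∈ Finset.Ico n N, ((m : ℝ) + 1) ^ p
      = ∑ i ∈ Finset.range (N - n), ((n:ℝ) + ((i+1:ℕ):ℝ)) ^ p := by
    rw [Finset.sum_Ico_eq_sum_range]
    apply Finset.sum_congr rfl
    intro i _
    push_cast
    ring_nf
  rw [heq]
  refine key.trans ?_
  have hN : (0:ℝ) ≤ (N:ℝ)^(p+1) := Real.rpow_nonneg (by positivity) _
  have hrw : ((N:ℝ)^(p+1) - (n:ℝ)^(p+1))/(p+1) = ((n:ℝ)^(p+1) - (N:ℝ)^(p+1))/(-(p+1)) := by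
    rw [div_neg, ← neg_div, neg_sub]
  rw [hrw, div_le_div_iff_of_pos_right (by linarith : (0:ℝ) < -(p+1))]
  linarith

theorem stmt12 (d e : ℝ) (hd : |d| < 1) (he : |e| < 1) (α β : ℕ → ℝ) (C : ℝ)
    (hα1 : ∀ j : ℕ, |α j| ≤ C * ((j : ℝ) + 1) ^ (-d - 1))
    (hα2 : ∀ j : ℕ, |α j - α (j + 1)| ≤ C * ((j : ℝ) + 1) ^ (-d - 2))
    (hβ1 : ∀ j : ℕ, |β j| ≤ C * ((j : ℝ) + 1) ^ (e - 1))
    (hβ2 : ∀ j : ℕ, |β j - β (j + 1)| ≤ C * ((j : ℝ) + 1) ^ (e - 2))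
    (hd0 : d = 0 → Summable fun j : ℕ => |α j|)
    (he0 : e = 0 → Summable fun j : ℕ => |β j|)
    (hen : e < 0 → HasSum β 0) :
    ∃ C' : ℝ, 0 < C' ∧ ∀ j t : ℕ, 0 < j → 0 < t →
      (j ≤ t →
        |∑ k ∈ Finset.range (j + 1), α (k + t) * β (j - k)|
          ≤ C' * (j : ℝ) ^ e * (t : ℝ) ^ (-d - 1)) ∧
      (t < j →
        |∑ k ∈ Finset.range (j + 1), α (k + t) * β (j - k)|
          ≤ C' * (j : ℝ) ^ (e - 1) * max ((j : ℝ) ^ (-d)) ((t : ℝ) ^ (-d))) := by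
  rw [abs_lt] at hd he
  obtain ⟨hd1, hd2⟩ := hd
  obtain ⟨he1, he2⟩ := he
  set C₀ := max C 1 with hC₀def
  have hC₀1 : (1:ℝ) ≤ C₀ := le_max_right _ _
  have hC₀0 : (0:ℝ) < C₀ := lt_of_lt_of_le one_pos hC₀1
  have hα1' : ∀ n : ℕ, |α n| ≤ C₀ * ((n:ℝ)+1)^(-d-1) := fun n =>
    (hα1 n).trans (mul_le_mul_of_nonneg_right (le_max_left _ _) (Real.rpow_nonneg (by positivity) _))
  have hα2' : ∀ n : ℕ, |α n - α (n+1)| ≤ C₀ * ((n:ℝ)+1)^(-d-2) := fun n =>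
    (hα2 n).trans (mul_le_mul_of_nonneg_right (le_max_left _ _) (Real.rpow_nonneg (by positivity) _))
  have hβ1' : ∀ n : ℕ, |β n| ≤ C₀ * ((n:ℝ)+1)^(e-1) := fun n =>
    (hβ1 n).trans (mul_le_mul_of_nonneg_right (le_max_left _ _) (Real.rpow_nonneg (by positivity) _))
  have hmono : ∀ (x y p : ℝ), 0 < x → x ≤ y → p ≤ 0 → y ^ p ≤ x ^ p :=
    fun x y p hx hxy hp => Real.rpow_le_rpow_of_nonpos hx hxy hp
  have hhalf : ∀ (p x : ℝ), -3 ≤ p → p ≤ 0 → 0 < x → (x/2) ^ p ≤ 8 * x ^ p := by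
    intro p x hp3 hp0 hx
    have h1 : (x/2) ^ p = x ^ p * ((2:ℝ) ^ p)⁻¹ := by
      rw [div_eq_mul_inv, Real.mul_rpow hx.le (by norm_num), Real.inv_rpow (by norm_num)]
    have h2 : ((2:ℝ) ^ p)⁻¹ = (2:ℝ) ^ (-p) := (Real.rpow_neg (by norm_num) p).symm
    have h3 : (2:ℝ) ^ (-p) ≤ (2:ℝ) ^ (3:ℝ) :=
      Real.rpow_le_rpow_of_exponent_le one_le_two (by linarith)
    have h4 : (2:ℝ) ^ (3:ℝ) = 8 := by
      rw [show (3:ℝ) = ((3:ℕ):ℝ) by norm_num, Real.rpow_natCast]; norm_num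
    rw [h1, h2]
    calc x ^ p * (2:ℝ)^(-p) ≤ x ^ p * 8 := by
          apply mul_le_mul_of_nonneg_left _ (Real.rpow_nonneg hx.le _)
          rw [← h4]; exact h3
      _ = 8 * x ^ p := by ring
  -- pointwise bounds
  have hαT : ∀ (n t : ℕ), 1 ≤ t → t ≤ n → |α n| ≤ C₀ * (t:ℝ)^(-d-1) := by
    intro n t ht htn
    refine (hα1' n).trans (mul_le_mul_of_nonneg_left ?_ hC₀0.le)
    have hT1 : (1:ℝ) ≤ (t:ℝ) := by exact_mod_cast ht
    have h2 : (t:ℝ) ≤ (n:ℝ)+1 := by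
      have : (t:ℝ) ≤ (n:ℝ) := by exact_mod_cast htn
      linarith
    exact hmono _ _ _ (by linarith) h2 (by linarith)
  have hαP : ∀ j t r : ℕ, 1 ≤ j → 1 ≤ t → r < j - j/2 →
      |α (j + t - r)| ≤ C₀ * ((t:ℝ) + (j:ℝ)/2)^(-d-1) := by
    intro j t r hj ht hr
    refine (hα1' _).trans (mul_le_mul_of_nonneg_left ?_ hC₀0.le)
    have hT1 : (1:ℝ) ≤ (t:ℝ) := by exact_mod_cast ht
    have hJ1 : (1:ℝ) ≤ (j:ℝ) := by exact_mod_cast hj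
    have h2r : 2*r ≤ j := by omega
    have hrjt : r ≤ j + t := by omega
    have hc : ((j + t - r:ℕ):ℝ) = (j:ℝ) + (t:ℝ) - (r:ℝ) := by
      rw [Nat.cast_sub hrjt]; push_cast; ring
    have hr2 : (r:ℝ) ≤ (j:ℝ)/2 := by
      have := (Nat.cast_le (α := ℝ)).mpr h2r; push_cast at this; linarith
    refine hmono _ _ _ (by linarith) ?_ (by linarith)
    rw [hc]; linarith
  have hαD : ∀ j t i : ℕ, 1 ≤ j → 1 ≤ t → i + 1 < j - j/2 →
      |α (j + t - (i+1)) - α (j + t - i)| ≤ C₀ * ((t:ℝ) + (j:ℝ)/2)^(-d-2) := by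
    intro j t i hj ht hi
    have hn : j + t - (i+1) + 1 = j + t - i := by omega
    have h := hα2' (j + t - (i+1))
    rw [hn] at h
    refine h.trans (mul_le_mul_of_nonneg_left ?_ hC₀0.le)
    have hT1 : (1:ℝ) ≤ (t:ℝ) := by exact_mod_cast ht
    have hJ1 : (1:ℝ) ≤ (j:ℝ) := by exact_mod_cast hj
    have h2i : 2*(i+1) ≤ j := by omega
    have hc : ((j + t - (i+1):ℕ):ℝ) = (j:ℝ) + (t:ℝ) - ((i:ℝ)+1) := by
      rw [Nat.cast_sub (by omega : i+1 ≤ j+t)]; push_cast; ring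
    have hi2 : (i:ℝ)+1 ≤ (j:ℝ)/2 := by
      have := (Nat.cast_le (α := ℝ)).mpr h2i; push_cast at this; linarith
    refine hmono _ _ _ (by linarith) ?_ (by linarith)
    rw [hc]; linarith
  -- decomposition of the sum
  have hdec : ∀ j t : ℕ, 1 ≤ j →
      ∑ k ∈ Finset.range (j+1), α (k+t) * β (j-k)
      = (∑ k ∈ Finset.range (j/2+1), α (k+t) * β (j-k))
        + ∑ r ∈ Finset.range (j - j/2), α (j + t - r) * β r := by
    intro j t hj
    rw [← Finset.sum_range_add_sum_Ico (fun k => α (k+t) * β (j-k))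
        (show j/2+1 ≤ j+1 by omega)]
    congr 1
    rw [Finset.sum_Ico_eq_sum_range]
    rw [show j + 1 - (j/2+1) = j - j/2 from by omega]
    rw [← Finset.sum_range_reflect (fun r => α (j + t - r) * β r) (j - j/2)]
    apply Finset.sum_congr rfl
    intro i hi
    rw [Finset.mem_range] at hi
    congr 1
    · congr 1; omega
    · congr 1; omega
  -- bound on the first part of the sum
  have hS1 : ∀ j t : ℕ, 1 ≤ j →
      |∑ k ∈ Finset.range (j/2+1), α (k+t) * β (j-k)|
        ≤ (∑ k ∈ Finset.range (j/2+1), |α (k+t)|) * (8*C₀*(j:ℝ)^(e-1)) := by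
    intro j t hj
    have hJ1 : (1:ℝ) ≤ (j:ℝ) := by exact_mod_cast hj
    refine (Finset.abs_sum_le_sum_abs _ _).trans ?_
    rw [Finset.sum_mul]
    apply Finset.sum_le_sum
    intro k hk
    rw [Finset.mem_range] at hk
    rw [abs_mul]
    refine mul_le_mul_of_nonneg_left ?_ (abs_nonneg _)
    have hk' : k ≤ j/2 := by omega
    have hge : (j:ℝ)/2 ≤ ((j-k:ℕ):ℝ)+1 := by
      have h2 : j ≤ 2*(j-k)+2 := by omega
      have := (Nat.cast_le (α := ℝ)).mpr h2
      push_cast at this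
      linarith
    calc |β (j-k)| ≤ C₀ * (((j-k:ℕ):ℝ)+1)^(e-1) := hβ1' _
      _ ≤ C₀ * ((j:ℝ)/2)^(e-1) :=
          mul_le_mul_of_nonneg_left (hmono _ _ _ (by linarith) hge (by linarith)) hC₀0.le
      _ ≤ C₀ * (8*(j:ℝ)^(e-1)) :=
          mul_le_mul_of_nonneg_left (hhalf (e-1) _ (by linarith) (by linarith) (by linarith)) hC₀0.le
      _ = 8*C₀*(j:ℝ)^(e-1) := by ring
  -- partial sum tail bound for β when e < 0
  have hB : e < 0 → ∀ r : ℕ, |∑ m ∈ Finset.range (r+1), β m| ≤ (C₀/(-e)) * ((r:ℝ)+1)^e := by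
    intro hee r
    have hts : Filter.Tendsto (fun n => ∑ i ∈ Finset.range n, β i) Filter.atTop (nhds 0) :=
      (hen hee).tendsto_sum_nat
    have habs : Filter.Tendsto
        (fun N => |∑ i ∈ Finset.range N, β i| + (C₀/(-e)) * ((r:ℝ)+1)^e)
        Filter.atTop (nhds (0 + (C₀/(-e)) * ((r:ℝ)+1)^e)) := by
      refine Filter.Tendsto.add ?_ tendsto_const_nhds
      simpa using hts.abs
    have hev : ∀ᶠ N in Filter.atTop,
        |∑ m ∈ Finset.range (r+1), β m|
          ≤ |∑ i ∈ Finset.range N, β i| + (C₀/(-e)) * ((r:ℝ)+1)^e := by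
      filter_upwards [Filter.eventually_ge_atTop (r+1)] with N hN
      have hsplit := Finset.sum_range_add_sum_Ico β hN
      have h1 : |∑ m ∈ Finset.range (r+1), β m|
          ≤ |∑ m ∈ Finset.range N, β m| + |∑ m ∈ Finset.Ico (r+1) N, β m| := by
        have he' : ∑ m ∈ Finset.range (r+1), β m
            = ∑ m ∈ Finset.range N, β m - ∑ m ∈ Finset.Ico (r+1) N, β m := by
          linarith [hsplit]
        rw [he']; exact abs_sub _ _
      refine h1.trans ?_
      have h2 : |∑ m ∈ Finset.Ico (r+1) N, β m| ≤ (C₀/(-e)) * ((r:ℝ)+1)^e := by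
        refine (Finset.abs_sum_le_sum_abs _ _).trans ?_
        calc ∑ m ∈ Finset.Ico (r+1) N, |β m|
            ≤ ∑ m ∈ Finset.Ico (r+1) N, C₀ * ((m:ℝ)+1)^(e-1) :=
              Finset.sum_le_sum (fun m _ => hβ1' m)
          _ = C₀ * ∑ m ∈ Finset.Ico (r+1) N, ((m:ℝ)+1)^(e-1) := by rw [Finset.mul_sum]
          _ ≤ C₀ * (((r+1:ℕ):ℝ)^(e-1+1) / (-(e-1+1))) :=
              mul_le_mul_of_nonneg_left (sumB (e-1) (by linarith) (r+1) N (by omega)) hC₀0.le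
          _ = (C₀/(-e)) * ((r:ℝ)+1)^e := by
              rw [show e-1+1 = e by ring]; push_cast; ring
      linarith
    have := ge_of_tendsto habs hev
    linarith [this]
  -- bound on ∑ |α (k+t)| for the case t < j
  have hAj : ∃ CA : ℝ, 0 ≤ CA ∧ ∀ j t : ℕ, 1 ≤ j → 1 ≤ t → t < j →
      ∑ k ∈ Finset.range (j/2+1), |α (k+t)| ≤ CA * max ((j:ℝ)^(-d)) ((t:ℝ)^(-d)) := by
    have hshift : ∀ j t : ℕ, ∑ k ∈ Finset.range (j/2+1), |α (k+t)|
        = ∑ m ∈ Finset.Ico t (t + (j/2+1)), |α m| := by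
      intro j t
      rw [Finset.sum_Ico_eq_sum_range]
      simp only [Nat.add_sub_cancel_left]
      exact Finset.sum_congr rfl (fun i _ => by rw [Nat.add_comm t i])
    have hsum_pt : ∀ (s : Finset ℕ), ∑ m ∈ s, |α m| ≤ C₀ * ∑ m ∈ s, ((m:ℝ)+1)^(-d-1) := by
      intro s
      rw [Finset.mul_sum]
      exact Finset.sum_le_sum (fun m _ => hα1' m)
    rcases lt_trichotomy d 0 with hdd | hdd | hdd
    · -- d < 0
      have hnd : (0:ℝ) < -d := by linarith
      refine ⟨C₀ * (1+1/(-d)) * 2, by positivity, ?_⟩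
      intro j t hj ht htj
      have hJ1 : (1:ℝ) ≤ (j:ℝ) := by exact_mod_cast hj
      rw [hshift]
      refine (hsum_pt _).trans ?_
      have hsub : ∑ m ∈ Finset.Ico t (t + (j/2+1)), ((m:ℝ)+1)^(-d-1)
          ≤ ∑ m ∈ Finset.range (t + (j/2+1)), ((m:ℝ)+1)^(-d-1) := by
        refine Finset.sum_le_sum_of_subset_of_nonneg ?_ (fun m _ _ => Real.rpow_nonneg (by positivity) _)
        intro x hx
        rw [Finset.mem_range]
        exact (Finset.mem_Ico.mp hx).2
      have hsA := sumA (-d-1) (by linarith) (by linarith) (t + (j/2+1))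
      rw [show -d-1+1 = -d by ring] at hsA
      have hle2j : ((t + (j/2+1):ℕ):ℝ) ≤ 2*(j:ℝ) := by
        have : t + (j/2+1) ≤ 2*j := by omega
        have := (Nat.cast_le (α := ℝ)).mpr this
        push_cast at this ⊢
        linarith
      have h2j : ((t + (j/2+1):ℕ):ℝ)^(-d) ≤ 2 * (j:ℝ)^(-d) := by
        calc ((t + (j/2+1):ℕ):ℝ)^(-d) ≤ (2*(j:ℝ))^(-d) :=
              Real.rpow_le_rpow (by positivity) hle2j (by linarith)
          _ = (2:ℝ)^(-d) * (j:ℝ)^(-d) := Real.mul_rpow (by norm_num) (by positivity)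
          _ ≤ 2 * (j:ℝ)^(-d) := by
              refine mul_le_mul_of_nonneg_right ?_ (Real.rpow_nonneg (by positivity) _)
              calc (2:ℝ)^(-d) ≤ (2:ℝ)^(1:ℝ) :=
                    Real.rpow_le_rpow_of_exponent_le one_le_two (by linarith)
                _ = 2 := Real.rpow_one 2
      calc C₀ * ∑ m ∈ Finset.Ico t (t + (j/2+1)), ((m:ℝ)+1)^(-d-1)
          ≤ C₀ * ((1+1/(-d)) * ((t + (j/2+1):ℕ):ℝ)^(-d)) :=
            mul_le_mul_of_nonneg_left (hsub.trans hsA) hC₀0.le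
        _ ≤ C₀ * ((1+1/(-d)) * (2 * (j:ℝ)^(-d))) := by
            refine mul_le_mul_of_nonneg_left (mul_le_mul_of_nonneg_left h2j ?_) hC₀0.le
            positivity
        _ = C₀ * (1+1/(-d)) * 2 * (j:ℝ)^(-d) := by ring
        _ ≤ C₀ * (1+1/(-d)) * 2 * max ((j:ℝ)^(-d)) ((t:ℝ)^(-d)) := by
            refine mul_le_mul_of_nonneg_left (le_max_left _ _) ?_
            positivity
    · -- d = 0
      refine ⟨∑' n, |α n|, tsum_nonneg (fun _ => abs_nonneg _), ?_⟩
      intro j t hj ht htj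
      rw [hshift]
      have hle := Summable.sum_le_tsum (Finset.Ico t (t + (j/2+1))) (fun i _ => abs_nonneg _) (hd0 hdd)
      rw [hdd]
      simp only [neg_zero, Real.rpow_zero, max_self, mul_one]
      exact hle
    · -- d > 0
      refine ⟨C₀ * (1/d), by positivity, ?_⟩
      intro j t hj ht htj
      rw [hshift]
      refine (hsum_pt _).trans ?_
      have hsB := sumB (-d-1) (by linarith) t (t + (j/2+1)) ht
      rw [show -d-1+1 = -d by ring, show -(-d) = d by ring] at hsB
      calc C₀ * ∑ m ∈ Finset.Ico t (t + (j/2+1)), ((m:ℝ)+1)^(-d-1)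
          ≤ C₀ * ((t:ℝ)^(-d) / d) := mul_le_mul_of_nonneg_left hsB hC₀0.le
        _ = C₀ * (1/d) * (t:ℝ)^(-d) := by ring
        _ ≤ C₀ * (1/d) * max ((j:ℝ)^(-d)) ((t:ℝ)^(-d)) := by
            refine mul_le_mul_of_nonneg_left (le_max_right _ _) ?_
            positivity
  -- Case j ≤ t
  have main1 : ∃ c1 : ℝ, 0 ≤ c1 ∧ ∀ j t : ℕ, 1 ≤ j → 1 ≤ t → j ≤ t →
      |∑ k ∈ Finset.range (j+1), α (k+t) * β (j-k)|
        ≤ c1 * ((j:ℝ)^e * (t:ℝ)^(-d-1)) := by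
    rcases lt_trichotomy e 0 with hee | hee | hee
    · -- e < 0
      have hne : (0:ℝ) < -e := by linarith
      set Cβ := C₀/(-e) with hCβdef
      have hCβ0 : (0:ℝ) < Cβ := div_pos hC₀0 hne
      have hBB := hB hee
      have hein : (0:ℝ) < e + 1 := by linarith
      refine ⟨8*C₀^2 + (8*C₀*Cβ + C₀*Cβ*(1+1/(e+1))), by positivity, ?_⟩
      intro j t hj ht hjt
      have hJ1 : (1:ℝ) ≤ (j:ℝ) := by exact_mod_cast hj
      have hT1 : (1:ℝ) ≤ (t:ℝ) := by exact_mod_cast ht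
      have hJ0 : (0:ℝ) < (j:ℝ) := by linarith
      have hT0 : (0:ℝ) < (t:ℝ) := by linarith
      have hJT : (j:ℝ) ≤ (t:ℝ) := by exact_mod_cast hjt
      rw [hdec j t hj]
      refine (abs_add_le _ _).trans ?_
      have hJe : (j:ℝ)^(e-1) * (j:ℝ) = (j:ℝ)^e := by
        have h := Real.rpow_add_one (ne_of_gt hJ0) (e-1)
        rw [show e-1+1 = e by ring] at h
        exact h.symm
      have hs1 : |∑ k ∈ Finset.range (j/2+1), α (k+t) * β (j-k)|
          ≤ 8*C₀^2 * ((j:ℝ)^e * (t:ℝ)^(-d-1)) := by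
        refine (hS1 j t hj).trans ?_
        have hA : ∑ k ∈ Finset.range (j/2+1), |α (k+t)| ≤ (j:ℝ) * (C₀ * (t:ℝ)^(-d-1)) := by
          have hcard := Finset.sum_le_card_nsmul (Finset.range (j/2+1)) (fun k => |α (k+t)|)
            (C₀ * (t:ℝ)^(-d-1)) (fun k _ => hαT (k+t) t ht (by omega))
          rw [Finset.card_range, nsmul_eq_mul] at hcard
          refine hcard.trans (mul_le_mul_of_nonneg_right ?_ (by positivity))
          have hle : j/2+1 ≤ j := by omega
          exact_mod_cast hle
        calc (∑ k ∈ Finset.range (j/2+1), |α (k+t)|) * (8*C₀*(j:ℝ)^(e-1))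
            ≤ ((j:ℝ) * (C₀ * (t:ℝ)^(-d-1))) * (8*C₀*(j:ℝ)^(e-1)) :=
              mul_le_mul_of_nonneg_right hA (by positivity)
          _ = 8*C₀^2 * (((j:ℝ)^(e-1) * (j:ℝ)) * (t:ℝ)^(-d-1)) := by ring
          _ = 8*C₀^2 * ((j:ℝ)^e * (t:ℝ)^(-d-1)) := by rw [hJe]
      have hR1 : 1 ≤ j - j/2 := by omega
      have hJR : (j:ℝ)/2 ≤ ((j - j/2 : ℕ):ℝ) := by
        have h2 : j ≤ 2*(j - j/2) := by omega
        have := (Nat.cast_le (α := ℝ)).mpr h2; push_cast at this; linarith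
      have hPT : ((t:ℝ) + (j:ℝ)/2)^(-d-1) ≤ (t:ℝ)^(-d-1) :=
        hmono _ _ _ hT0 (by linarith) (by linarith)
      have hPT2 : ((t:ℝ) + (j:ℝ)/2)^(-d-2) ≤ (t:ℝ)^(-d-2) :=
        hmono _ _ _ hT0 (by linarith) (by linarith)
      have habel := Finset.sum_range_by_parts (fun r => α (j + t - r)) β (j - j/2)
      simp only [smul_eq_mul] at habel
      have hs2 : |∑ r ∈ Finset.range (j - j/2), α (j + t - r) * β r|
          ≤ (8*C₀*Cβ + C₀*Cβ*(1+1/(e+1))) * ((j:ℝ)^e * (t:ℝ)^(-d-1)) := by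
        rw [habel]
        refine (abs_sub _ _).trans ?_
        have hbd : |α (j + t - (j - j/2 - 1)) * ∑ i ∈ Finset.range (j - j/2), β i|
            ≤ 8*C₀*Cβ * ((j:ℝ)^e * (t:ℝ)^(-d-1)) := by
          rw [abs_mul]
          have h1 : |α (j + t - (j - j/2 - 1))| ≤ C₀ * (t:ℝ)^(-d-1) :=
            (hαP j t (j - j/2 - 1) hj ht (by omega)).trans
              (mul_le_mul_of_nonneg_left hPT hC₀0.le)
          have h2 : |∑ i ∈ Finset.range (j - j/2), β i| ≤ Cβ * (8 * (j:ℝ)^e) := by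
            have hrw : j - j/2 = (j - j/2 - 1) + 1 := by omega
            rw [hrw]
            refine (hBB (j - j/2 - 1)).trans ?_
            have hcast : ((j - j/2 - 1:ℕ):ℝ) + 1 = ((j - j/2:ℕ):ℝ) := by
              have h1' : (1:ℕ) ≤ j - j/2 := hR1
              push_cast [Nat.cast_sub h1']
              ring
            rw [hcast]
            refine mul_le_mul_of_nonneg_left ?_ hCβ0.le
            calc ((j - j/2:ℕ):ℝ)^e ≤ ((j:ℝ)/2)^e := hmono _ _ _ (by linarith) hJR (by linarith)
              _ ≤ 8 * (j:ℝ)^e := hhalf e _ (by linarith) (by linarith) hJ0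
          calc |α (j + t - (j - j/2 - 1))| * |∑ i ∈ Finset.range (j - j/2), β i|
              ≤ (C₀ * (t:ℝ)^(-d-1)) * (Cβ * (8 * (j:ℝ)^e)) :=
                mul_le_mul h1 h2 (abs_nonneg _) (by positivity)
            _ = 8*C₀*Cβ * ((j:ℝ)^e * (t:ℝ)^(-d-1)) := by ring
        have hdf : |∑ i ∈ Finset.range (j - j/2 - 1),
              (α (j + t - (i+1)) - α (j + t - i)) * ∑ m ∈ Finset.range (i+1), β m|
            ≤ C₀*Cβ*(1+1/(e+1)) * ((j:ℝ)^e * (t:ℝ)^(-d-1)) := by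
          refine (Finset.abs_sum_le_sum_abs _ _).trans ?_
          have hpt : ∀ i ∈ Finset.range (j - j/2 - 1),
              |(α (j + t - (i+1)) - α (j + t - i)) * ∑ m ∈ Finset.range (i+1), β m|
              ≤ C₀ * ((t:ℝ) + (j:ℝ)/2)^(-d-2) * (Cβ * ((i:ℝ)+1)^e) := by
            intro i hi
            rw [Finset.mem_range] at hi
            rw [abs_mul]
            exact mul_le_mul (hαD j t i hj ht (by omega)) (hBB i) (abs_nonneg _) (by positivity)
          refine (Finset.sum_le_sum hpt).trans ?_
          have hfold : ∑ i ∈ Finset.range (j - j/2 - 1),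
                C₀ * ((t:ℝ) + (j:ℝ)/2)^(-d-2) * (Cβ * ((i:ℝ)+1)^e)
              = C₀ * ((t:ℝ)+(j:ℝ)/2)^(-d-2) * Cβ * ∑ i ∈ Finset.range (j - j/2 - 1), ((i:ℝ)+1)^e := by
            rw [Finset.mul_sum]
            exact Finset.sum_congr rfl (fun i _ => by ring)
          rw [hfold]
          have hsA := sumA e he1 hee (j - j/2 - 1)
          have hRj : ((j - j/2 - 1:ℕ):ℝ) ≤ (j:ℝ) := by
            have hle : j - j/2 - 1 ≤ j := by omega
            exact_mod_cast hle
          have hsum : ∑ i ∈ Finset.range (j - j/2 - 1), ((i:ℝ)+1)^e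
              ≤ (1+1/(e+1)) * (j:ℝ)^(e+1) := by
            refine hsA.trans (mul_le_mul_of_nonneg_left ?_ (by positivity))
            exact Real.rpow_le_rpow (by positivity) hRj (by linarith)
          calc C₀ * ((t:ℝ)+(j:ℝ)/2)^(-d-2) * Cβ * ∑ i ∈ Finset.range (j - j/2 - 1), ((i:ℝ)+1)^e
              ≤ C₀ * ((t:ℝ)+(j:ℝ)/2)^(-d-2) * Cβ * ((1+1/(e+1)) * (j:ℝ)^(e+1)) :=
                mul_le_mul_of_nonneg_left hsum (by positivity)
            _ ≤ C₀ * (t:ℝ)^(-d-2) * Cβ * ((1+1/(e+1)) * (j:ℝ)^(e+1)) :=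
                mul_le_mul_of_nonneg_right
                  (mul_le_mul_of_nonneg_right
                    (mul_le_mul_of_nonneg_left hPT2 hC₀0.le) hCβ0.le) (by positivity)
            _ = C₀*Cβ*(1+1/(e+1)) * ((j:ℝ)^(e+1) * (t:ℝ)^(-d-2)) := by ring
            _ ≤ C₀*Cβ*(1+1/(e+1)) * ((j:ℝ)^e * (t:ℝ)^(-d-1)) := by
                refine mul_le_mul_of_nonneg_left ?_ (by positivity)
                have h1 : (j:ℝ)^(e+1) = (j:ℝ)^e * (j:ℝ) := Real.rpow_add_one (ne_of_gt hJ0) e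
                have h2 : (t:ℝ)^(-d-1) = (t:ℝ)^(-d-2) * (t:ℝ) := by
                  have h := Real.rpow_add_one (ne_of_gt hT0) (-d-2)
                  rw [show -d-2+1 = -d-1 by ring] at h
                  exact h
                rw [h1, h2]
                calc (j:ℝ)^e * (j:ℝ) * (t:ℝ)^(-d-2)
                    ≤ (j:ℝ)^e * (t:ℝ) * (t:ℝ)^(-d-2) :=
                      mul_le_mul_of_nonneg_right
                        (mul_le_mul_of_nonneg_left hJT (Real.rpow_nonneg hJ0.le _))
                        (Real.rpow_nonneg hT0.le _)
                  _ = (j:ℝ)^e * ((t:ℝ)^(-d-2) * (t:ℝ)) := by ring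
        calc |α (j + t - (j - j/2 - 1)) * ∑ i ∈ Finset.range (j - j/2), β i|
              + |∑ i ∈ Finset.range (j - j/2 - 1),
                  (α (j + t - (i+1)) - α (j + t - i)) * ∑ m ∈ Finset.range (i+1), β m|
            ≤ 8*C₀*Cβ * ((j:ℝ)^e * (t:ℝ)^(-d-1))
              + C₀*Cβ*(1+1/(e+1)) * ((j:ℝ)^e * (t:ℝ)^(-d-1)) := add_le_add hbd hdf
          _ = (8*C₀*Cβ + C₀*Cβ*(1+1/(e+1))) * ((j:ℝ)^e * (t:ℝ)^(-d-1)) := by ring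
      calc |∑ k ∈ Finset.range (j/2+1), α (k+t) * β (j-k)|
            + |∑ r ∈ Finset.range (j - j/2), α (j + t - r) * β r|
          ≤ 8*C₀^2 * ((j:ℝ)^e * (t:ℝ)^(-d-1))
            + (8*C₀*Cβ + C₀*Cβ*(1+1/(e+1))) * ((j:ℝ)^e * (t:ℝ)^(-d-1)) := add_le_add hs1 hs2
        _ = (8*C₀^2 + (8*C₀*Cβ + C₀*Cβ*(1+1/(e+1)))) * ((j:ℝ)^e * (t:ℝ)^(-d-1)) := by ring
    · -- e = 0
      have hSβ0 : (0:ℝ) ≤ ∑' n, |β n| := tsum_nonneg (fun _ => abs_nonneg _)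
      refine ⟨C₀ * ∑' n, |β n|, by positivity, ?_⟩
      intro j t hj ht hjt
      have hT1 : (1:ℝ) ≤ (t:ℝ) := by exact_mod_cast ht
      have hT0 : (0:ℝ) < (t:ℝ) := by linarith
      rw [hee, Real.rpow_zero]
      calc |∑ k ∈ Finset.range (j+1), α (k+t) * β (j-k)|
          ≤ ∑ k ∈ Finset.range (j+1), |α (k+t) * β (j-k)| := Finset.abs_sum_le_sum_abs _ _
        _ ≤ ∑ k ∈ Finset.range (j+1), C₀ * (t:ℝ)^(-d-1) * |β (j-k)| := by
            refine Finset.sum_le_sum ?_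
            intro k hk
            rw [abs_mul]
            exact mul_le_mul_of_nonneg_right (hαT (k+t) t ht (by omega)) (abs_nonneg _)
        _ = C₀ * (t:ℝ)^(-d-1) * ∑ k ∈ Finset.range (j+1), |β (j-k)| := by rw [Finset.mul_sum]
        _ = C₀ * (t:ℝ)^(-d-1) * ∑ m ∈ Finset.range (j+1), |β m| := by
            congr 1
            rw [← Finset.sum_range_reflect (fun m => |β m|) (j+1)]
            refine Finset.sum_congr rfl (fun k hk => ?_)
            rw [Finset.mem_range] at hk
            have h' : j + 1 - 1 - k = j - k := by omega
            rw [h']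
        _ ≤ C₀ * (t:ℝ)^(-d-1) * ∑' m, |β m| :=
            mul_le_mul_of_nonneg_left
              (Summable.sum_le_tsum _ (fun i _ => abs_nonneg _) (he0 hee)) (by positivity)
        _ = C₀ * (∑' n, |β n|) * (1 * (t:ℝ)^(-d-1)) := by ring
    · -- e > 0
      refine ⟨2*C₀^2*(1+1/e), by positivity, ?_⟩
      intro j t hj ht hjt
      have hJ1 : (1:ℝ) ≤ (j:ℝ) := by exact_mod_cast hj
      have hT1 : (1:ℝ) ≤ (t:ℝ) := by exact_mod_cast ht
      have hJ0 : (0:ℝ) < (j:ℝ) := by linarith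
      have hT0 : (0:ℝ) < (t:ℝ) := by linarith
      calc |∑ k ∈ Finset.range (j+1), α (k+t) * β (j-k)|
          ≤ ∑ k ∈ Finset.range (j+1), |α (k+t) * β (j-k)| := Finset.abs_sum_le_sum_abs _ _
        _ ≤ ∑ k ∈ Finset.range (j+1), C₀ * (t:ℝ)^(-d-1) * C₀ * (((j-k:ℕ):ℝ)+1)^(e-1) := by
            refine Finset.sum_le_sum ?_
            intro k hk
            rw [abs_mul]
            calc |α (k+t)| * |β (j-k)|
                ≤ (C₀ * (t:ℝ)^(-d-1)) * (C₀ * (((j-k:ℕ):ℝ)+1)^(e-1)) :=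
                  mul_le_mul (hαT (k+t) t ht (by omega)) (hβ1' (j-k)) (abs_nonneg _) (by positivity)
              _ = C₀ * (t:ℝ)^(-d-1) * C₀ * (((j-k:ℕ):ℝ)+1)^(e-1) := by ring
        _ = C₀ * (t:ℝ)^(-d-1) * C₀ * ∑ k ∈ Finset.range (j+1), (((j-k:ℕ):ℝ)+1)^(e-1) := by
            rw [Finset.mul_sum]
        _ = C₀ * (t:ℝ)^(-d-1) * C₀ * ∑ m ∈ Finset.range (j+1), ((m:ℝ)+1)^(e-1) := by
            congr 1
            rw [← Finset.sum_range_reflect (fun m => ((m:ℝ)+1)^(e-1)) (j+1)]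
            refine Finset.sum_congr rfl (fun k hk => ?_)
            rw [Finset.mem_range] at hk
            have : j - k = j + 1 - 1 - k := by omega
            rw [this]
        _ ≤ C₀ * (t:ℝ)^(-d-1) * C₀ * ((1+1/e) * (2*(j:ℝ)^e)) := by
            refine mul_le_mul_of_nonneg_left ?_ (by positivity)
            have hsA := sumA (e-1) (by linarith) (by linarith) (j+1)
            rw [show e-1+1 = e by ring] at hsA
            refine hsA.trans (mul_le_mul_of_nonneg_left ?_ (by positivity))
            have hcast : ((j+1:ℕ):ℝ) = (j:ℝ)+1 := by push_cast; ring
            rw [hcast]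
            calc ((j:ℝ)+1)^e ≤ (2*(j:ℝ))^e :=
                  Real.rpow_le_rpow (by linarith) (by linarith) hee.le
              _ = (2:ℝ)^e * (j:ℝ)^e := Real.mul_rpow (by norm_num) (by linarith)
              _ ≤ 2 * (j:ℝ)^e := by
                  refine mul_le_mul_of_nonneg_right ?_ (Real.rpow_nonneg (by linarith) _)
                  calc (2:ℝ)^e ≤ (2:ℝ)^(1:ℝ) :=
                        Real.rpow_le_rpow_of_exponent_le one_le_two (by linarith)
                    _ = 2 := Real.rpow_one 2
        _ = 2*C₀^2*(1+1/e) * ((j:ℝ)^e * (t:ℝ)^(-d-1)) := by ring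
  have main2 : ∃ c2 : ℝ, 0 ≤ c2 ∧ ∀ j t : ℕ, 1 ≤ j → 1 ≤ t → t < j →
      |∑ k ∈ Finset.range (j+1), α (k+t) * β (j-k)|
        ≤ c2 * ((j:ℝ)^(e-1) * max ((j:ℝ)^(-d)) ((t:ℝ)^(-d))) := by
    obtain ⟨CA, hCA0, hCA⟩ := hAj
    have hs1m : ∀ j t : ℕ, 1 ≤ j → 1 ≤ t → t < j →
        |∑ k ∈ Finset.range (j/2+1), α (k+t) * β (j-k)|
          ≤ 8*C₀*CA * ((j:ℝ)^(e-1) * max ((j:ℝ)^(-d)) ((t:ℝ)^(-d))) := by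
      intro j t hj ht htj
      refine (hS1 j t hj).trans ?_
      calc (∑ k ∈ Finset.range (j/2+1), |α (k+t)|) * (8*C₀*(j:ℝ)^(e-1))
          ≤ (CA * max ((j:ℝ)^(-d)) ((t:ℝ)^(-d))) * (8*C₀*(j:ℝ)^(e-1)) := by
            refine mul_le_mul_of_nonneg_right (hCA j t hj ht htj) ?_
            positivity
        _ = 8*C₀*CA * ((j:ℝ)^(e-1) * max ((j:ℝ)^(-d)) ((t:ℝ)^(-d))) := by ring
    rcases lt_trichotomy e 0 with hee | hee | hee
    · -- e < 0
      have hne : (0:ℝ) < -e := by linarith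
      set Cβ := C₀/(-e) with hCβdef
      have hCβ0 : (0:ℝ) < Cβ := div_pos hC₀0 hne
      have hBB := hB hee
      have hein : (0:ℝ) < e + 1 := by linarith
      refine ⟨8*C₀*CA + (64*C₀*Cβ + 8*C₀*Cβ*(1+1/(e+1))), by positivity, ?_⟩
      intro j t hj ht htj
      have hJ1 : (1:ℝ) ≤ (j:ℝ) := by exact_mod_cast hj
      have hT1 : (1:ℝ) ≤ (t:ℝ) := by exact_mod_cast ht
      have hJ0 : (0:ℝ) < (j:ℝ) := by linarith
      have hT0 : (0:ℝ) < (t:ℝ) := by linarith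
      have hR1 : 1 ≤ j - j/2 := by omega
      have hJR : (j:ℝ)/2 ≤ ((j - j/2 : ℕ):ℝ) := by
        have h2 : j ≤ 2*(j - j/2) := by omega
        have := (Nat.cast_le (α := ℝ)).mpr h2; push_cast at this; linarith
      have hP1 : ((t:ℝ)+(j:ℝ)/2)^(-d-1) ≤ 8*(j:ℝ)^(-d-1) :=
        (hmono ((j:ℝ)/2) ((t:ℝ)+(j:ℝ)/2) (-d-1) (by linarith) (by linarith) (by linarith)).trans
          (hhalf (-d-1) (j:ℝ) (by linarith) (by linarith) hJ0)
      have hP2 : ((t:ℝ)+(j:ℝ)/2)^(-d-2) ≤ 8*(j:ℝ)^(-d-2) :=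
        (hmono ((j:ℝ)/2) ((t:ℝ)+(j:ℝ)/2) (-d-2) (by linarith) (by linarith) (by linarith)).trans
          (hhalf (-d-2) (j:ℝ) (by linarith) (by linarith) hJ0)
      have hsw1 : (j:ℝ)^(-d-1) * (j:ℝ)^e = (j:ℝ)^(e-1) * (j:ℝ)^(-d) := by
        rw [← Real.rpow_add hJ0, ← Real.rpow_add hJ0]; ring_nf
      have hsw2 : (j:ℝ)^(-d-2) * (j:ℝ)^(e+1) = (j:ℝ)^(e-1) * (j:ℝ)^(-d) := by
        rw [← Real.rpow_add hJ0, ← Real.rpow_add hJ0]; ring_nf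
      have hJM : (j:ℝ)^(e-1) * (j:ℝ)^(-d)
          ≤ (j:ℝ)^(e-1) * max ((j:ℝ)^(-d)) ((t:ℝ)^(-d)) :=
        mul_le_mul_of_nonneg_left (le_max_left _ _) (Real.rpow_nonneg hJ0.le _)
      rw [hdec j t hj]
      refine (abs_add_le _ _).trans ?_
      have habel := Finset.sum_range_by_parts (fun r => α (j + t - r)) β (j - j/2)
      simp only [smul_eq_mul] at habel
      have hs2 : |∑ r ∈ Finset.range (j - j/2), α (j + t - r) * β r|
          ≤ (64*C₀*Cβ + 8*C₀*Cβ*(1+1/(e+1)))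
            * ((j:ℝ)^(e-1) * max ((j:ℝ)^(-d)) ((t:ℝ)^(-d))) := by
        rw [habel]
        refine (abs_sub _ _).trans ?_
        have hbd : |α (j + t - (j - j/2 - 1)) * ∑ i ∈ Finset.range (j - j/2), β i|
            ≤ 64*C₀*Cβ * ((j:ℝ)^(e-1) * max ((j:ℝ)^(-d)) ((t:ℝ)^(-d))) := by
          rw [abs_mul]
          have h1 : |α (j + t - (j - j/2 - 1))| ≤ C₀ * (8*(j:ℝ)^(-d-1)) :=
            (hαP j t (j - j/2 - 1) hj ht (by omega)).trans
              (mul_le_mul_of_nonneg_left hP1 hC₀0.le)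
          have h2 : |∑ i ∈ Finset.range (j - j/2), β i| ≤ Cβ * (8 * (j:ℝ)^e) := by
            have hrw : j - j/2 = (j - j/2 - 1) + 1 := by omega
            rw [hrw]
            refine (hBB (j - j/2 - 1)).trans ?_
            have hcast : ((j - j/2 - 1:ℕ):ℝ) + 1 = ((j - j/2:ℕ):ℝ) := by
              have h1' : (1:ℕ) ≤ j - j/2 := hR1
              push_cast [Nat.cast_sub h1']
              ring
            rw [hcast]
            refine mul_le_mul_of_nonneg_left ?_ hCβ0.le
            calc ((j - j/2:ℕ):ℝ)^e ≤ ((j:ℝ)/2)^e := hmono _ _ _ (by linarith) hJR (by linarith)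
              _ ≤ 8 * (j:ℝ)^e := hhalf e _ (by linarith) (by linarith) hJ0
          calc |α (j + t - (j - j/2 - 1))| * |∑ i ∈ Finset.range (j - j/2), β i|
              ≤ (C₀ * (8*(j:ℝ)^(-d-1))) * (Cβ * (8 * (j:ℝ)^e)) :=
                mul_le_mul h1 h2 (abs_nonneg _) (by positivity)
            _ = 64*C₀*Cβ * ((j:ℝ)^(-d-1) * (j:ℝ)^e) := by ring
            _ = 64*C₀*Cβ * ((j:ℝ)^(e-1) * (j:ℝ)^(-d)) := by rw [hsw1]
            _ ≤ 64*C₀*Cβ * ((j:ℝ)^(e-1) * max ((j:ℝ)^(-d)) ((t:ℝ)^(-d))) :=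
                mul_le_mul_of_nonneg_left hJM (by positivity)
        have hdf : |∑ i ∈ Finset.range (j - j/2 - 1),
              (α (j + t - (i+1)) - α (j + t - i)) * ∑ m ∈ Finset.range (i+1), β m|
            ≤ 8*C₀*Cβ*(1+1/(e+1)) * ((j:ℝ)^(e-1) * max ((j:ℝ)^(-d)) ((t:ℝ)^(-d))) := by
          refine (Finset.abs_sum_le_sum_abs _ _).trans ?_
          have hpt : ∀ i ∈ Finset.range (j - j/2 - 1),
              |(α (j + t - (i+1)) - α (j + t - i)) * ∑ m ∈ Finset.range (i+1), β m|
              ≤ C₀ * ((t:ℝ) + (j:ℝ)/2)^(-d-2) * (Cβ * ((i:ℝ)+1)^e) := by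
            intro i hi
            rw [Finset.mem_range] at hi
            rw [abs_mul]
            exact mul_le_mul (hαD j t i hj ht (by omega)) (hBB i) (abs_nonneg _) (by positivity)
          refine (Finset.sum_le_sum hpt).trans ?_
          have hfold : ∑ i ∈ Finset.range (j - j/2 - 1),
                C₀ * ((t:ℝ) + (j:ℝ)/2)^(-d-2) * (Cβ * ((i:ℝ)+1)^e)
              = C₀ * ((t:ℝ)+(j:ℝ)/2)^(-d-2) * Cβ
                  * ∑ i ∈ Finset.range (j - j/2 - 1), ((i:ℝ)+1)^e := by
            rw [Finset.mul_sum]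
            exact Finset.sum_congr rfl (fun i _ => by ring)
          rw [hfold]
          have hsA := sumA e he1 hee (j - j/2 - 1)
          have hRj : ((j - j/2 - 1:ℕ):ℝ) ≤ (j:ℝ) := by
            have hle : j - j/2 - 1 ≤ j := by omega
            exact_mod_cast hle
          have hsum : ∑ i ∈ Finset.range (j - j/2 - 1), ((i:ℝ)+1)^e
              ≤ (1+1/(e+1)) * (j:ℝ)^(e+1) := by
            refine hsA.trans (mul_le_mul_of_nonneg_left ?_ (by positivity))
            exact Real.rpow_le_rpow (by positivity) hRj (by linarith)
          calc C₀ * ((t:ℝ)+(j:ℝ)/2)^(-d-2) * Cβ * ∑ i ∈ Finset.range (j - j/2 - 1), ((i:ℝ)+1)^e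
              ≤ C₀ * ((t:ℝ)+(j:ℝ)/2)^(-d-2) * Cβ * ((1+1/(e+1)) * (j:ℝ)^(e+1)) :=
                mul_le_mul_of_nonneg_left hsum (by positivity)
            _ ≤ C₀ * (8*(j:ℝ)^(-d-2)) * Cβ * ((1+1/(e+1)) * (j:ℝ)^(e+1)) :=
                mul_le_mul_of_nonneg_right
                  (mul_le_mul_of_nonneg_right
                    (mul_le_mul_of_nonneg_left hP2 hC₀0.le) hCβ0.le) (by positivity)
            _ = 8*C₀*Cβ*(1+1/(e+1)) * ((j:ℝ)^(-d-2) * (j:ℝ)^(e+1)) := by ring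
            _ = 8*C₀*Cβ*(1+1/(e+1)) * ((j:ℝ)^(e-1) * (j:ℝ)^(-d)) := by rw [hsw2]
            _ ≤ 8*C₀*Cβ*(1+1/(e+1)) * ((j:ℝ)^(e-1) * max ((j:ℝ)^(-d)) ((t:ℝ)^(-d))) :=
                mul_le_mul_of_nonneg_left hJM (by positivity)
        calc |α (j + t - (j - j/2 - 1)) * ∑ i ∈ Finset.range (j - j/2), β i|
              + |∑ i ∈ Finset.range (j - j/2 - 1),
                  (α (j + t - (i+1)) - α (j + t - i)) * ∑ m ∈ Finset.range (i+1), β m|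
            ≤ 64*C₀*Cβ * ((j:ℝ)^(e-1) * max ((j:ℝ)^(-d)) ((t:ℝ)^(-d)))
              + 8*C₀*Cβ*(1+1/(e+1)) * ((j:ℝ)^(e-1) * max ((j:ℝ)^(-d)) ((t:ℝ)^(-d))) :=
              add_le_add hbd hdf
          _ = (64*C₀*Cβ + 8*C₀*Cβ*(1+1/(e+1)))
                * ((j:ℝ)^(e-1) * max ((j:ℝ)^(-d)) ((t:ℝ)^(-d))) := by ring
      calc |∑ k ∈ Finset.range (j/2+1), α (k+t) * β (j-k)|
            + |∑ r ∈ Finset.range (j - j/2), α (j + t - r) * β r|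
          ≤ 8*C₀*CA * ((j:ℝ)^(e-1) * max ((j:ℝ)^(-d)) ((t:ℝ)^(-d)))
            + (64*C₀*Cβ + 8*C₀*Cβ*(1+1/(e+1)))
                * ((j:ℝ)^(e-1) * max ((j:ℝ)^(-d)) ((t:ℝ)^(-d))) :=
            add_le_add (hs1m j t hj ht htj) hs2
        _ = (8*C₀*CA + (64*C₀*Cβ + 8*C₀*Cβ*(1+1/(e+1))))
              * ((j:ℝ)^(e-1) * max ((j:ℝ)^(-d)) ((t:ℝ)^(-d))) := by ring
    · -- e = 0
      have hSβ0 : (0:ℝ) ≤ ∑' n, |β n| := tsum_nonneg (fun _ => abs_nonneg _)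
      refine ⟨8*C₀*CA + 8*C₀*(∑' n, |β n|), by positivity, ?_⟩
      intro j t hj ht htj
      have hJ1 : (1:ℝ) ≤ (j:ℝ) := by exact_mod_cast hj
      have hT1 : (1:ℝ) ≤ (t:ℝ) := by exact_mod_cast ht
      have hJ0 : (0:ℝ) < (j:ℝ) := by linarith
      have hT0 : (0:ℝ) < (t:ℝ) := by linarith
      have hP1 : ((t:ℝ)+(j:ℝ)/2)^(-d-1) ≤ 8*(j:ℝ)^(-d-1) :=
        (hmono ((j:ℝ)/2) ((t:ℝ)+(j:ℝ)/2) (-d-1) (by linarith) (by linarith) (by linarith)).trans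
          (hhalf (-d-1) (j:ℝ) (by linarith) (by linarith) hJ0)
      have hsw : (j:ℝ)^(e-1) * (j:ℝ)^(-d) = (j:ℝ)^(-d-1) := by
        rw [← Real.rpow_add hJ0, hee]; ring_nf
      have hJM : (j:ℝ)^(e-1) * (j:ℝ)^(-d)
          ≤ (j:ℝ)^(e-1) * max ((j:ℝ)^(-d)) ((t:ℝ)^(-d)) :=
        mul_le_mul_of_nonneg_left (le_max_left _ _) (Real.rpow_nonneg hJ0.le _)
      rw [hdec j t hj]
      refine (abs_add_le _ _).trans ?_
      have hs2 : |∑ r ∈ Finset.range (j - j/2), α (j + t - r) * β r|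
          ≤ 8*C₀*(∑' n, |β n|) * ((j:ℝ)^(e-1) * max ((j:ℝ)^(-d)) ((t:ℝ)^(-d))) := by
        calc |∑ r ∈ Finset.range (j - j/2), α (j + t - r) * β r|
            ≤ ∑ r ∈ Finset.range (j - j/2), |α (j + t - r) * β r| :=
              Finset.abs_sum_le_sum_abs _ _
          _ ≤ ∑ r ∈ Finset.range (j - j/2), C₀ * ((t:ℝ)+(j:ℝ)/2)^(-d-1) * |β r| := by
              refine Finset.sum_le_sum ?_
              intro r hr
              rw [Finset.mem_range] at hr
              rw [abs_mul]
              exact mul_le_mul_of_nonneg_right (hαP j t r hj ht hr) (abs_nonneg _)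
          _ = C₀ * ((t:ℝ)+(j:ℝ)/2)^(-d-1) * ∑ r ∈ Finset.range (j - j/2), |β r| := by
              rw [Finset.mul_sum]
          _ ≤ C₀ * ((t:ℝ)+(j:ℝ)/2)^(-d-1) * ∑' n, |β n| :=
              mul_le_mul_of_nonneg_left
                (Summable.sum_le_tsum _ (fun i _ => abs_nonneg _) (he0 hee)) (by positivity)
          _ ≤ C₀ * (8*(j:ℝ)^(-d-1)) * ∑' n, |β n| :=
              mul_le_mul_of_nonneg_right (mul_le_mul_of_nonneg_left hP1 hC₀0.le) hSβ0
          _ = 8*C₀*(∑' n, |β n|) * ((j:ℝ)^(-d-1)) := by ring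
          _ = 8*C₀*(∑' n, |β n|) * ((j:ℝ)^(e-1) * (j:ℝ)^(-d)) := by rw [hsw]
          _ ≤ 8*C₀*(∑' n, |β n|) * ((j:ℝ)^(e-1) * max ((j:ℝ)^(-d)) ((t:ℝ)^(-d))) :=
              mul_le_mul_of_nonneg_left hJM (by positivity)
      calc |∑ k ∈ Finset.range (j/2+1), α (k+t) * β (j-k)|
            + |∑ r ∈ Finset.range (j - j/2), α (j + t - r) * β r|
          ≤ 8*C₀*CA * ((j:ℝ)^(e-1) * max ((j:ℝ)^(-d)) ((t:ℝ)^(-d)))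
            + 8*C₀*(∑' n, |β n|) * ((j:ℝ)^(e-1) * max ((j:ℝ)^(-d)) ((t:ℝ)^(-d))) :=
            add_le_add (hs1m j t hj ht htj) hs2
        _ = (8*C₀*CA + 8*C₀*(∑' n, |β n|))
              * ((j:ℝ)^(e-1) * max ((j:ℝ)^(-d)) ((t:ℝ)^(-d))) := by ring
    · -- e > 0
      refine ⟨8*C₀*CA + 8*C₀^2*(1+1/e), by positivity, ?_⟩
      intro j t hj ht htj
      have hJ1 : (1:ℝ) ≤ (j:ℝ) := by exact_mod_cast hj
      have hT1 : (1:ℝ) ≤ (t:ℝ) := by exact_mod_cast ht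
      have hJ0 : (0:ℝ) < (j:ℝ) := by linarith
      have hT0 : (0:ℝ) < (t:ℝ) := by linarith
      have hP1 : ((t:ℝ)+(j:ℝ)/2)^(-d-1) ≤ 8*(j:ℝ)^(-d-1) :=
        (hmono ((j:ℝ)/2) ((t:ℝ)+(j:ℝ)/2) (-d-1) (by linarith) (by linarith) (by linarith)).trans
          (hhalf (-d-1) (j:ℝ) (by linarith) (by linarith) hJ0)
      have hsw1 : (j:ℝ)^(-d-1) * (j:ℝ)^e = (j:ℝ)^(e-1) * (j:ℝ)^(-d) := by
        rw [← Real.rpow_add hJ0, ← Real.rpow_add hJ0]; ring_nf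
      have hJM : (j:ℝ)^(e-1) * (j:ℝ)^(-d)
          ≤ (j:ℝ)^(e-1) * max ((j:ℝ)^(-d)) ((t:ℝ)^(-d)) :=
        mul_le_mul_of_nonneg_left (le_max_left _ _) (Real.rpow_nonneg hJ0.le _)
      rw [hdec j t hj]
      refine (abs_add_le _ _).trans ?_
      have hs2 : |∑ r ∈ Finset.range (j - j/2), α (j + t - r) * β r|
          ≤ 8*C₀^2*(1+1/e) * ((j:ℝ)^(e-1) * max ((j:ℝ)^(-d)) ((t:ℝ)^(-d))) := by
        calc |∑ r ∈ Finset.range (j - j/2), α (j + t - r) * β r|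
            ≤ ∑ r ∈ Finset.range (j - j/2), |α (j + t - r) * β r| :=
              Finset.abs_sum_le_sum_abs _ _
          _ ≤ ∑ r ∈ Finset.range (j - j/2),
                C₀ * ((t:ℝ)+(j:ℝ)/2)^(-d-1) * (C₀ * ((r:ℝ)+1)^(e-1)) := by
              refine Finset.sum_le_sum ?_
              intro r hr
              rw [Finset.mem_range] at hr
              rw [abs_mul]
              exact mul_le_mul (hαP j t r hj ht hr) (hβ1' r) (abs_nonneg _) (by positivity)
          _ = C₀ * ((t:ℝ)+(j:ℝ)/2)^(-d-1) * C₀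
                * ∑ r ∈ Finset.range (j - j/2), ((r:ℝ)+1)^(e-1) := by
              rw [Finset.mul_sum]
              exact Finset.sum_congr rfl (fun r _ => by ring)
          _ ≤ C₀ * ((t:ℝ)+(j:ℝ)/2)^(-d-1) * C₀ * ((1+1/e) * (j:ℝ)^e) := by
              refine mul_le_mul_of_nonneg_left ?_ (by positivity)
              have hsA := sumA (e-1) (by linarith) (by linarith) (j - j/2)
              rw [show e-1+1 = e by ring] at hsA
              refine hsA.trans (mul_le_mul_of_nonneg_left ?_ (by positivity))
              refine Real.rpow_le_rpow (by positivity) ?_ hee.le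
              have hle : j - j/2 ≤ j := by omega
              exact_mod_cast hle
          _ ≤ C₀ * (8*(j:ℝ)^(-d-1)) * C₀ * ((1+1/e) * (j:ℝ)^e) := by
              refine mul_le_mul_of_nonneg_right
                (mul_le_mul_of_nonneg_right
                  (mul_le_mul_of_nonneg_left hP1 hC₀0.le) hC₀0.le) (by positivity)
          _ = 8*C₀^2*(1+1/e) * ((j:ℝ)^(-d-1) * (j:ℝ)^e) := by ring
          _ = 8*C₀^2*(1+1/e) * ((j:ℝ)^(e-1) * (j:ℝ)^(-d)) := by rw [hsw1]
          _ ≤ 8*C₀^2*(1+1/e) * ((j:ℝ)^(e-1) * max ((j:ℝ)^(-d)) ((t:ℝ)^(-d))) :=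
              mul_le_mul_of_nonneg_left hJM (by positivity)
      calc |∑ k ∈ Finset.range (j/2+1), α (k+t) * β (j-k)|
            + |∑ r ∈ Finset.range (j - j/2), α (j + t - r) * β r|
          ≤ 8*C₀*CA * ((j:ℝ)^(e-1) * max ((j:ℝ)^(-d)) ((t:ℝ)^(-d)))
            + 8*C₀^2*(1+1/e) * ((j:ℝ)^(e-1) * max ((j:ℝ)^(-d)) ((t:ℝ)^(-d))) :=
            add_le_add (hs1m j t hj ht htj) hs2
        _ = (8*C₀*CA + 8*C₀^2*(1+1/e))
              * ((j:ℝ)^(e-1) * max ((j:ℝ)^(-d)) ((t:ℝ)^(-d))) := by ring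
  obtain ⟨c1, hc10, hm1⟩ := main1
  obtain ⟨c2, hc20, hm2⟩ := main2
  refine ⟨max c1 c2 + 1, by positivity, ?_⟩
  intro j t hj ht
  constructor
  · intro hjt
    have hX0 : (0:ℝ) ≤ (j:ℝ)^e * (t:ℝ)^(-d-1) := by positivity
    calc |∑ k ∈ Finset.range (j+1), α (k+t) * β (j-k)|
        ≤ c1 * ((j:ℝ)^e * (t:ℝ)^(-d-1)) := hm1 j t hj ht hjt
      _ ≤ (max c1 c2 + 1) * ((j:ℝ)^e * (t:ℝ)^(-d-1)) :=
          mul_le_mul_of_nonneg_right (by have := le_max_left c1 c2; linarith) hX0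
      _ = (max c1 c2 + 1) * (j:ℝ)^e * (t:ℝ)^(-d-1) := by ring
  · intro htj
    have hX0 : (0:ℝ) ≤ (j:ℝ)^(e-1) * max ((j:ℝ)^(-d)) ((t:ℝ)^(-d)) := by
      refine mul_nonneg (Real.rpow_nonneg (by positivity) _) ?_
      exact le_trans (Real.rpow_nonneg (by positivity) _) (le_max_left _ _)
    calc |∑ k ∈ Finset.range (j+1), α (k+t) * β (j-k)|
        ≤ c2 * ((j:ℝ)^(e-1) * max ((j:ℝ)^(-d)) ((t:ℝ)^(-d))) := hm2 j t hj ht htj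
      _ ≤ (max c1 c2 + 1) * ((j:ℝ)^(e-1) * max ((j:ℝ)^(-d)) ((t:ℝ)^(-d))) :=
          mul_le_mul_of_nonneg_right (by have := le_max_right c1 c2; linarith) hX0
      _ = (max c1 c2 + 1) * (j:ℝ)^(e-1) * max ((j:ℝ)^(-d)) ((t:ℝ)^(-d)) := by ring
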